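/- Let n ≥ 2 and let T = (t_{i,j}) be an n×n real matrix with positive entries satisfying t_{i,i} ≥ Σ_{j≠i} t_{i,j} for every row i, and let W = S·(I_n − T·S) where S is the diagonal matrix with S_{i,i} = 1/t_{i,i}. Then for all indices i, j, k: |w_{i,j}| ≤ M/(m²(n−1)²) and |w_{i,j} − w_{i,k}| ≤ M/(m²(n−1)²). -/

import Mathlib

theorem stmt_6 {n : ℕ} (hn : 2 ≤ n) (T : Matrix (Fin n) (Fin n) ℝ)
    (hpos : ∀ i j, 0 < T i j)
    (hdom : ∀ i, ∑ j ∈ Finset.univ.erase i, T i j ≤ T i i)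
    (m M : ℝ) (Δ : Fin n → ℝ)
    (hΔ : ∀ i, Δ i = T i i - ∑ j ∈ Finset.univ.erase i, T i j)
    (hm1 : ∀ i j, i ≠ j → m ≤ T i j)
    (hm2 : ∃ i j, i ≠ j ∧ T i j = m)
    (hM1 : ∀ i j, i ≠ j → T i j ≤ M)
    (hM2 : ∀ i, Δ i ≤ M)
    (hM3 : (∃ i j, i ≠ j ∧ T i j = M) ∨ (∃ i, Δ i = M))
    (S W : Matrix (Fin n) (Fin n) ℝ)
    (hS : S = Matrix.diagonal fun k => (T k k)⁻¹)
    (hW : W = S * (1 - T * S)) :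
    ∀ i j k, |W i j| ≤ M / (m ^ 2 * ((n : ℝ) - 1) ^ 2) ∧
      |W i j - W i k| ≤ M / (m ^ 2 * ((n : ℝ) - 1) ^ 2) := by
  have hm0 : 0 < m := by
    obtain ⟨i, j, hij, h⟩ := hm2
    exact h ▸ hpos i j
  have hn1 : (1 : ℝ) ≤ (n : ℝ) - 1 := by
    have : (2 : ℝ) ≤ (n : ℝ) := by exact_mod_cast hn
    linarith
  have hM0 : 0 < M := by
    have h01 : (⟨0, by omega⟩ : Fin n) ≠ ⟨1, by omega⟩ := by
      simp [Fin.ext_iff]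
    exact lt_of_lt_of_le (hpos _ _) (hM1 _ _ h01)
  have htii : ∀ i : Fin n, ((n : ℝ) - 1) * m ≤ T i i := by
    intro i
    refine le_trans ?_ (hdom i)
    have hcard : (Finset.univ.erase i).card = n - 1 := by
      simp [Finset.card_erase_of_mem]
    calc ((n : ℝ) - 1) * m = (n - 1 : ℕ) * m := by
          push_cast [Nat.cast_sub (by omega : 1 ≤ n)]; ring
      _ = ∑ _j ∈ Finset.univ.erase i, m := by
          rw [Finset.sum_const, hcard, nsmul_eq_mul]
      _ ≤ ∑ j ∈ Finset.univ.erase i, T i j := by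
          refine Finset.sum_le_sum fun j hj => hm1 i j ?_
          exact (Finset.ne_of_mem_erase hj).symm
  have htpos : ∀ i : Fin n, 0 < T i i := fun i => hpos i i
  have hden : 0 < m ^ 2 * ((n : ℝ) - 1) ^ 2 := by positivity
  set B := M / (m ^ 2 * ((n : ℝ) - 1) ^ 2) with hB
  have hW' : ∀ i j, -B ≤ W i j ∧ W i j ≤ 0 := by
    intro i j
    have hWij : W i j = (T i i)⁻¹ * ((1 : Matrix (Fin n) (Fin n) ℝ) i j
        - T i j * (T j j)⁻¹) := by
      rw [hW, hS]
      simp [Matrix.diagonal_mul, Matrix.mul_diagonal, Matrix.sub_apply]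
    by_cases hij : i = j
    · subst hij
      rw [hWij]
      simp only [Matrix.one_apply_eq, mul_inv_cancel₀ (htpos i).ne', sub_self,
        mul_zero]
      have : 0 < B := div_pos hM0 hden
      constructor <;> linarith
    · have hone : (1 : Matrix (Fin n) (Fin n) ℝ) i j = 0 := by
        simp [Matrix.one_apply, hij]
      rw [hWij, hone]
      have key : T i j / (T i i * T j j) ≤ B := by
        rw [hB]
        apply div_le_div₀ hM0.le (hM1 i j hij) hden
        have h1 := htii i
        have h2 := htii j
        have hp : 0 ≤ ((n : ℝ) - 1) * m := by positivity
        have hmul : (((n : ℝ) - 1) * m) * (((n : ℝ) - 1) * m) ≤ T i i * T j j :=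
          mul_le_mul h1 h2 hp (htpos i).le
        nlinarith [hmul]
      have heq : (T i i)⁻¹ * (0 - T i j * (T j j)⁻¹)
          = -(T i j / (T i i * T j j)) := by
        ring
      rw [heq]
      have hq : 0 ≤ T i j / (T i i * T j j) :=
        div_nonneg (hpos i j).le (mul_pos (htpos i) (htpos j)).le
      constructor <;> linarith
  intro i j k
  obtain ⟨h1, h2⟩ := hW' i j
  obtain ⟨h3, h4⟩ := hW' i k
  have hB0 : 0 ≤ B := le_of_lt (div_pos hM0 hden)
  exact ⟨abs_le.mpr ⟨h1, h2.trans hB0⟩, abs_le.mpr ⟨by linarith, by linarith⟩⟩
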